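/- For all càdlàg inputs φ₁, φ₂ there exists a unique solution (ψ₁, ψ₂) of the integral equations for (φ₁, φ₂); moreover ψ₁ and ψ₂ are themselves càdlàg. -/

import Mathlib

open MeasureTheory Set Filter intervalIntegral
open scoped Topology

noncomputable section IEaux

/-- coefficient matrix as a continuous linear map on `ℝ × ℝ` -/
def IEA (β γ ε : ℝ) : (ℝ × ℝ) →L[ℝ] (ℝ × ℝ) :=
  ((β : ℝ) • ContinuousLinearMap.snd ℝ ℝ ℝ).prod
    ((-ε) • ContinuousLinearMap.fst ℝ ℝ ℝ + (-(β * γ)) • ContinuousLinearMap.snd ℝ ℝ ℝ)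

lemma IEA_apply (β γ ε : ℝ) (p : ℝ × ℝ) :
    IEA β γ ε p = (β * p.2, -ε * p.1 + -(β * γ) * p.2) := by
  simp [IEA, ContinuousLinearMap.prod_apply, smul_eq_mul]

/-- the semigroup `exp (t A)` -/
def IER (β γ ε : ℝ) (t : ℝ) : (ℝ × ℝ) →L[ℝ] (ℝ × ℝ) :=
  NormedSpace.exp (t • IEA β γ ε)

lemma IER_deriv (β γ ε t : ℝ) :
    HasDerivAt (IER β γ ε) (IEA β γ ε * IER β γ ε t) t :=
  hasDerivAt_exp_smul_const' (IEA β γ ε) t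

lemma IER_cont (β γ ε : ℝ) : Continuous (IER β γ ε) :=
  by letI : NormedAlgebra ℚ ((ℝ × ℝ) →L[ℝ] (ℝ × ℝ)) := .restrictScalars ℚ ℝ _; exact NormedSpace.exp_continuous.comp (continuous_id.smul continuous_const)

lemma IER_cancel (β γ ε t : ℝ) (w : ℝ × ℝ) :
    IER β γ ε t (IER β γ ε (-t) w) = w := by
  have h : IER β γ ε t * IER β γ ε (-t) = 1 := by
    letI : NormedAlgebra ℚ ((ℝ × ℝ) →L[ℝ] (ℝ × ℝ)) := .restrictScalars ℚ ℝ _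
    rw [IER, IER, ← NormedSpace.exp_add_of_commute]
    · rw [← add_smul]
      simp
    · exact ((Commute.refl (IEA β γ ε)).smul_left t).smul_right (-t)
  have := congrArg (fun (L : (ℝ × ℝ) →L[ℝ] (ℝ × ℝ)) => L w) h
  simpa [ContinuousLinearMap.mul_apply] using this

/-- measurable + bounded on `uIcc a b` implies interval integrable -/
lemma II_of_bdd {E : Type*} [NormedAddCommGroup E] {h : ℝ → E}
    (mh : AEStronglyMeasurable h volume) {a b M : ℝ}
    (hb : ∀ s ∈ Set.uIcc a b, ‖h s‖ ≤ M) : IntervalIntegrable h volume a b := by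
  refine (_root_.intervalIntegrable_const (c := M)).mono_fun mh.restrict ?_
  filter_upwards [ae_restrict_mem measurableSet_uIoc] with s hs
  exact (hb s (uIoc_subset_uIcc hs)).trans (le_abs_self M)

end IEaux

/-- A càdlàg function on `[0,∞)`: Borel measurable, bounded on compacts,
right-continuous on `[0,∞)`, with finite left limits on `(0,∞)`. -/
def Cadlag (φ : ℝ → ℝ) : Prop :=
  Measurable φ ∧
  (∀ T : ℝ, 0 < T → ∃ M : ℝ, ∀ t ∈ Set.Icc (0 : ℝ) T, |φ t| ≤ M) ∧
  (∀ t : ℝ, 0 ≤ t → ContinuousWithinAt φ (Set.Ici t) t) ∧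
  (∀ t : ℝ, 0 < t → ∃ L : ℝ, Tendsto φ (nhdsWithin t (Set.Iio t)) (nhds L))

/-- `(ψ₁, ψ₂)` solves the integral equations of Lemma 5.2 for inputs `(φ₁, φ₂)`. -/
def SolvesIE (β γ ε : ℝ) (φ₁ φ₂ ψ₁ ψ₂ : ℝ → ℝ) : Prop :=
  Measurable ψ₁ ∧ Measurable ψ₂ ∧
  (∀ T : ℝ, 0 < T → ∃ M : ℝ, ∀ t ∈ Set.Icc (0 : ℝ) T, |ψ₁ t| ≤ M ∧ |ψ₂ t| ≤ M) ∧
  (∀ t : ℝ, 0 ≤ t →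
    ψ₁ t = φ₁ t + β * ∫ s in (0 : ℝ)..t, ψ₂ s ∧
    ψ₂ t = φ₂ t - β * γ * (∫ s in (0 : ℝ)..t, ψ₂ s) - ε * ∫ s in (0 : ℝ)..t, ψ₁ s)

/-- for càdlàg inputs the integral equations have a unique
solution on `[0,∞)`, which is itself càdlàg. -/
theorem stmt_5 (β γ ε : ℝ) (φ₁ φ₂ : ℝ → ℝ) (h₁ : Cadlag φ₁) (h₂ : Cadlag φ₂) :
    ∃ ψ₁ ψ₂ : ℝ → ℝ, SolvesIE β γ ε φ₁ φ₂ ψ₁ ψ₂ ∧ Cadlag ψ₁ ∧ Cadlag ψ₂ ∧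
      ∀ χ₁ χ₂ : ℝ → ℝ, SolvesIE β γ ε φ₁ φ₂ χ₁ χ₂ →
        ∀ t : ℝ, 0 ≤ t → χ₁ t = ψ₁ t ∧ χ₂ t = ψ₂ t := by
  classical
  obtain ⟨m₁, b₁, rc₁, ll₁⟩ := h₁
  obtain ⟨m₂, b₂, rc₂, ll₂⟩ := h₂
  set A := IEA β γ ε with hA
  -- truncated inputs (to control behaviour on the negative axis)
  set p₁ : ℝ → ℝ := fun t => φ₁ (max t 0) with hp₁
  set p₂ : ℝ → ℝ := fun t => φ₂ (max t 0) with hp₂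
  have hp₁eq : ∀ t, 0 ≤ t → p₁ t = φ₁ t := fun t ht => by simp [hp₁, max_eq_left ht]
  have hp₂eq : ∀ t, 0 ≤ t → p₂ t = φ₂ t := fun t ht => by simp [hp₂, max_eq_left ht]
  set f : ℝ → ℝ × ℝ := fun t => (p₁ t, p₂ t) with hfdef
  have mmax : Measurable fun t : ℝ => max t 0 := measurable_id.max measurable_const
  have mp₁ : Measurable p₁ := m₁.comp mmax
  have mp₂ : Measurable p₂ := m₂.comp mmax
  have mf : Measurable f := mp₁.prodMk mp₂
  -- boundedness of f on arbitrary intervals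
  have bf : ∀ a b : ℝ, ∃ M : ℝ, ∀ s ∈ Set.uIcc a b, ‖f s‖ ≤ M := by
    intro a b
    set T : ℝ := |a| + |b| + 1 with hT
    obtain ⟨M₁, hM₁⟩ := b₁ T (by positivity)
    obtain ⟨M₂, hM₂⟩ := b₂ T (by positivity)
    refine ⟨max M₁ M₂, fun s hs => ?_⟩
    have hsle : s ≤ T := by
      have := hs.2
      have h1 : max a b ≤ T := by
        apply max_le
        · have := le_abs_self a; have := abs_nonneg b; linarith
        · have := le_abs_self b; have := abs_nonneg a; linarith
      linarith
    have h0 : max s 0 ∈ Set.Icc (0 : ℝ) T := ⟨le_max_right _ _, max_le hsle (by positivity)⟩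
    rw [Prod.norm_def]
    exact max_le_max (by simpa [Real.norm_eq_abs] using hM₁ _ h0)
      (by simpa [Real.norm_eq_abs] using hM₂ _ h0)
  have fII : ∀ a b : ℝ, IntervalIntegrable f volume a b := by
    intro a b
    obtain ⟨M, hM⟩ := bf a b
    exact II_of_bdd mf.aestronglyMeasurable hM
  have p₁II : ∀ a b : ℝ, IntervalIntegrable p₁ volume a b := by
    intro a b
    obtain ⟨M, hM⟩ := bf a b
    exact II_of_bdd mp₁.aestronglyMeasurable
      (fun s hs => le_trans (by simpa using norm_fst_le (f s)) (hM s hs))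
  have p₂II : ∀ a b : ℝ, IntervalIntegrable p₂ volume a b := by
    intro a b
    obtain ⟨M, hM⟩ := bf a b
    exact II_of_bdd mp₂.aestronglyMeasurable
      (fun s hs => le_trans (by simpa using norm_snd_le (f s)) (hM s hs))
  -- right continuity of f on [0,∞)
  have rcf : ∀ t : ℝ, 0 ≤ t → ContinuousWithinAt f (Set.Ici t) t := by
    intro t ht
    have rp₁ : ContinuousWithinAt p₁ (Set.Ici t) t :=
      (rc₁ t ht).congr (fun s hs => hp₁eq s (le_trans ht hs)) (hp₁eq t ht)
    have rp₂ : ContinuousWithinAt p₂ (Set.Ici t) t :=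
      (rc₂ t ht).congr (fun s hs => hp₂eq s (le_trans ht hs)) (hp₂eq t ht)
    exact rp₁.prodMk rp₂
  -- the integrand g and the primitive c
  set g : ℝ → ℝ × ℝ := fun s => IER β γ ε (-s) (f s) with hgdef
  have evalcont : Continuous fun q : ((ℝ × ℝ) →L[ℝ] (ℝ × ℝ)) × (ℝ × ℝ) => q.1 q.2 :=
    isBoundedBilinearMap_apply.continuous
  have mg : Measurable g :=
    evalcont.measurable.comp ((((IER_cont β γ ε).comp continuous_neg).measurable).prodMk mf)
  have bg : ∀ a b : ℝ, ∃ M : ℝ, ∀ s ∈ Set.uIcc a b, ‖g s‖ ≤ M := by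
    intro a b
    obtain ⟨M, hM⟩ := bf a b
    obtain ⟨C, hC⟩ := isCompact_uIcc.exists_bound_of_continuousOn
      (s := Set.uIcc a b) ((IER_cont β γ ε).comp continuous_neg).continuousOn
    have hC0 : 0 ≤ C := le_trans (norm_nonneg _) (hC a Set.left_mem_uIcc)
    refine ⟨C * M, fun s hs => ?_⟩
    calc ‖g s‖ ≤ ‖IER β γ ε (-s)‖ * ‖f s‖ := ContinuousLinearMap.le_opNorm _ _
      _ ≤ C * M := mul_le_mul (hC s hs) (hM s hs) (norm_nonneg _) hC0
  have gII : ∀ a b : ℝ, IntervalIntegrable g volume a b := by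
    intro a b
    obtain ⟨M, hM⟩ := bg a b
    exact II_of_bdd mg.aestronglyMeasurable hM
  set c : ℝ → ℝ × ℝ := fun t => ∫ s in (0:ℝ)..t, g s with hcdef
  have ccont : Continuous c := intervalIntegral.continuous_primitive gII 0
  set x : ℝ → ℝ × ℝ := fun t => IER β γ ε t (c t) with hxdef
  have xcont : Continuous x := evalcont.comp ((IER_cont β γ ε).prodMk ccont)
  have xII : ∀ a b : ℝ, IntervalIntegrable x volume a b := fun a b =>
    xcont.intervalIntegrable a b
  -- the key identity
  have key : ∀ t : ℝ, 0 ≤ t →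
      x t = (∫ s in (0:ℝ)..t, f s) + A (∫ s in (0:ℝ)..t, x s) := by
    intro t ht
    set y : ℝ → ℝ × ℝ := fun u => (∫ s in (0:ℝ)..u, f s) + A (∫ s in (0:ℝ)..u, x s) with hy
    have derivx : ∀ u ∈ Set.Ico (0:ℝ) t, HasDerivWithinAt x (f u + A (x u)) (Set.Ici u) u := by
      intro u hu
      have hgc : ContinuousWithinAt g (Set.Ici u) u := by
        have h1 : ContinuousWithinAt (fun s => (IER β γ ε (-s), f s)) (Set.Ici u) u :=
          (((IER_cont β γ ε).comp continuous_neg).continuousWithinAt).prodMk (rcf u hu.1)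
        exact evalcont.continuousAt.comp_continuousWithinAt h1
      have hc : HasDerivWithinAt c (g u) (Set.Ici u) u :=
        intervalIntegral.integral_hasDerivWithinAt_right (gII 0 u)
          (mg.stronglyMeasurable.stronglyMeasurableAtFilter)
          (hgc.mono Set.Ioi_subset_Ici_self)
      have hR : HasDerivWithinAt (IER β γ ε) (A * IER β γ ε u) (Set.Ici u) u :=
        (IER_deriv β γ ε u).hasDerivWithinAt
      have h := hR.clm_apply hc
      have h2 : (A * IER β γ ε u) (c u) + IER β γ ε u (g u) = f u + A (x u) := by
        rw [ContinuousLinearMap.mul_apply]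
        rw [hgdef]
        simp only []
        rw [IER_cancel]
        exact add_comm _ _
      rw [h2] at h
      exact h
    have derivy : ∀ u ∈ Set.Ico (0:ℝ) t, HasDerivWithinAt y (f u + A (x u)) (Set.Ici u) u := by
      intro u hu
      have h1 : HasDerivWithinAt (fun w => ∫ s in (0:ℝ)..w, f s) (f u) (Set.Ici u) u :=
        intervalIntegral.integral_hasDerivWithinAt_right (fII 0 u)
          (mf.stronglyMeasurable.stronglyMeasurableAtFilter)
          ((rcf u hu.1).mono Set.Ioi_subset_Ici_self)
      have h2 : HasDerivWithinAt (fun w => ∫ s in (0:ℝ)..w, x s) (x u) (Set.Ici u) u :=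
        intervalIntegral.integral_hasDerivWithinAt_right (xII 0 u)
          (xcont.stronglyMeasurable.stronglyMeasurableAtFilter)
          (xcont.continuousWithinAt)
      exact h1.add (A.hasFDerivAt.comp_hasDerivWithinAt u h2)
    have contx : ContinuousOn x (Set.Icc 0 t) := xcont.continuousOn
    have conty : ContinuousOn y (Set.Icc 0 t) :=
      ((intervalIntegral.continuous_primitive fII 0).add
        (A.continuous.comp (intervalIntegral.continuous_primitive xII 0))).continuousOn
    have init : x 0 = y 0 := by
      simp [hxdef, hy, hcdef, intervalIntegral.integral_same]
    exact eq_of_has_deriv_right_eq derivx derivy contx conty init t (Set.right_mem_Icc.2 ht)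
  -- componentwise versions of the key identity
  have hfst : ∀ (h : ℝ → ℝ × ℝ), (∀ a b : ℝ, IntervalIntegrable h volume a b) → ∀ t : ℝ,
      (∫ s in (0:ℝ)..t, h s).1 = ∫ s in (0:ℝ)..t, (h s).1 := by
    intro h hh t
    simpa using ((ContinuousLinearMap.fst ℝ ℝ ℝ).intervalIntegral_comp_comm (hh 0 t)).symm
  have hsnd : ∀ (h : ℝ → ℝ × ℝ), (∀ a b : ℝ, IntervalIntegrable h volume a b) → ∀ t : ℝ,
      (∫ s in (0:ℝ)..t, h s).2 = ∫ s in (0:ℝ)..t, (h s).2 := by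
    intro h hh t
    simpa using ((ContinuousLinearMap.snd ℝ ℝ ℝ).intervalIntegral_comp_comm (hh 0 t)).symm
  have hX1 : ∀ t : ℝ, 0 ≤ t →
      (x t).1 = (∫ s in (0:ℝ)..t, p₁ s) + β * ∫ s in (0:ℝ)..t, (x s).2 := by
    intro t ht
    have h := congrArg Prod.fst (key t ht)
    rw [Prod.fst_add, IEA_apply] at h
    rw [h, hfst f fII, hsnd x xII]
  have hX2 : ∀ t : ℝ, 0 ≤ t →
      (x t).2 = (∫ s in (0:ℝ)..t, p₂ s) - β * γ * (∫ s in (0:ℝ)..t, (x s).2)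
        - ε * ∫ s in (0:ℝ)..t, (x s).1 := by
    intro t ht
    have h := congrArg Prod.snd (key t ht)
    rw [Prod.snd_add, IEA_apply] at h
    rw [h, hsnd f fII, hsnd x xII, hfst x xII]
    ring
  -- the solution
  set ψ₁ : ℝ → ℝ := fun t => p₁ t + β * (x t).2 with hψ₁def
  set ψ₂ : ℝ → ℝ := fun t => p₂ t - β * γ * (x t).2 - ε * (x t).1 with hψ₂def
  have X1cont : Continuous fun t => (x t).1 := continuous_fst.comp xcont
  have X2cont : Continuous fun t => (x t).2 := continuous_snd.comp xcont
  have mψ₁ : Measurable ψ₁ := mp₁.add (measurable_const.mul X2cont.measurable)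
  have mψ₂ : Measurable ψ₂ :=
    (mp₂.sub (measurable_const.mul X2cont.measurable)).sub
      (measurable_const.mul X1cont.measurable)
  have X1II : ∀ a b : ℝ, IntervalIntegrable (fun t => (x t).1) volume a b := fun a b =>
    X1cont.intervalIntegrable a b
  have X2II : ∀ a b : ℝ, IntervalIntegrable (fun t => (x t).2) volume a b := fun a b =>
    X2cont.intervalIntegrable a b
  -- integral identities for ψ
  have hIψ₁ : ∀ t : ℝ, 0 ≤ t → (∫ s in (0:ℝ)..t, ψ₁ s) = (x t).1 := by
    intro t ht
    rw [hψ₁def]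
    rw [intervalIntegral.integral_add (p₁II 0 t)
      (((X2II 0 t).const_mul β : IntervalIntegrable (fun s => β * (x s).2) volume 0 t)),
      intervalIntegral.integral_const_mul]
    exact (hX1 t ht).symm
  have hIψ₂ : ∀ t : ℝ, 0 ≤ t → (∫ s in (0:ℝ)..t, ψ₂ s) = (x t).2 := by
    intro t ht
    rw [hψ₂def]
    rw [intervalIntegral.integral_sub (((p₂II 0 t).sub ((X2II 0 t).const_mul (β * γ))))
      ((X1II 0 t).const_mul ε),
      intervalIntegral.integral_sub (p₂II 0 t) ((X2II 0 t).const_mul (β * γ)),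
      intervalIntegral.integral_const_mul, intervalIntegral.integral_const_mul]
    exact (hX2 t ht).symm
  -- boundedness of ψ on [0, T]
  have bψ : ∀ T : ℝ, 0 < T → ∃ M : ℝ, ∀ t ∈ Set.Icc (0:ℝ) T, |ψ₁ t| ≤ M ∧ |ψ₂ t| ≤ M := by
    intro T hT
    obtain ⟨M₁, hM₁⟩ := b₁ T hT
    obtain ⟨M₂, hM₂⟩ := b₂ T hT
    obtain ⟨C, hC⟩ := (isCompact_Icc (a := (0:ℝ)) (b := T)).exists_bound_of_continuousOn
      xcont.continuousOn
    have hC0 : 0 ≤ C := le_trans (norm_nonneg _) (hC 0 ⟨le_refl _, le_of_lt hT⟩)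
    refine ⟨|M₁| + |M₂| + (|β| + |β * γ| + |ε|) * C, fun t htT => ?_⟩
    have hx1 : |(x t).1| ≤ C := le_trans (by simpa using norm_fst_le (x t)) (hC t htT)
    have hx2 : |(x t).2| ≤ C := le_trans (by simpa using norm_snd_le (x t)) (hC t htT)
    have e₁ : |p₁ t| ≤ |M₁| := by
      rw [hp₁eq t htT.1]; exact (hM₁ t htT).trans (le_abs_self _)
    have e₂ : |p₂ t| ≤ |M₂| := by
      rw [hp₂eq t htT.1]; exact (hM₂ t htT).trans (le_abs_self _)
    constructor
    · calc |ψ₁ t| ≤ |p₁ t| + |β| * |(x t).2| := by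
            show |p₁ t + β * (x t).2| ≤ _
            calc |p₁ t + β * (x t).2| ≤ |p₁ t| + |β * (x t).2| :=
                  abs_add_le (p₁ t) (β * (x t).2)
              _ = |p₁ t| + |β| * |(x t).2| := by rw [abs_mul]
        _ ≤ |M₁| + |β| * C := by
            have := mul_le_mul_of_nonneg_left hx2 (abs_nonneg β); linarith
        _ ≤ |M₁| + |M₂| + (|β| + |β * γ| + |ε|) * C := by
            have h1 : 0 ≤ |β * γ| * C := mul_nonneg (abs_nonneg _) hC0
            have h2 : 0 ≤ |ε| * C := mul_nonneg (abs_nonneg _) hC0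
            have h3 : 0 ≤ |M₂| := abs_nonneg _
            nlinarith
    · calc |ψ₂ t| ≤ |p₂ t| + |β * γ| * |(x t).2| + |ε| * |(x t).1| := by
            show |p₂ t - β * γ * (x t).2 - ε * (x t).1| ≤ _
            rw [show p₂ t - β * γ * (x t).2 - ε * (x t).1
              = p₂ t + -(β * γ * (x t).2) + -(ε * (x t).1) from by ring]
            calc |p₂ t + -(β * γ * (x t).2) + -(ε * (x t).1)|
                ≤ |p₂ t + -(β * γ * (x t).2)| + |-(ε * (x t).1)| :=
                  abs_add_le (p₂ t + -(β * γ * (x t).2)) (-(ε * (x t).1))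
              _ ≤ |p₂ t| + |-(β * γ * (x t).2)| + |-(ε * (x t).1)| := by
                  have := abs_add_le (p₂ t) (-(β * γ * (x t).2)); linarith
              _ = |p₂ t| + |β * γ| * |(x t).2| + |ε| * |(x t).1| := by
                  rw [abs_neg, abs_neg, abs_mul (β * γ), abs_mul ε]
        _ ≤ |M₂| + |β * γ| * C + |ε| * C := by
            have u1 := mul_le_mul_of_nonneg_left hx2 (abs_nonneg (β * γ))
            have u2 := mul_le_mul_of_nonneg_left hx1 (abs_nonneg ε)
            linarith
        _ ≤ |M₁| + |M₂| + (|β| + |β * γ| + |ε|) * C := by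
            have h1 : 0 ≤ |β| * C := mul_nonneg (abs_nonneg _) hC0
            have h3 : 0 ≤ |M₁| := abs_nonneg _
            nlinarith
  -- ψ solves the integral equations
  have Hsol : SolvesIE β γ ε φ₁ φ₂ ψ₁ ψ₂ := by
    refine ⟨mψ₁, mψ₂, bψ, fun t ht => ⟨?_, ?_⟩⟩
    · rw [hIψ₂ t ht]
      show p₁ t + β * (x t).2 = φ₁ t + β * (x t).2
      rw [hp₁eq t ht]
    · rw [hIψ₂ t ht, hIψ₁ t ht]
      show p₂ t - β * γ * (x t).2 - ε * (x t).1 = φ₂ t - β * γ * (x t).2 - ε * (x t).1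
      rw [hp₂eq t ht]
  -- càdlàg properties
  have cad₁ : Cadlag ψ₁ := by
    refine ⟨mψ₁, ?_, ?_, ?_⟩
    · intro T hT
      obtain ⟨M, hM⟩ := bψ T hT
      exact ⟨M, fun t ht => (hM t ht).1⟩
    · intro t ht
      have rp₁ : ContinuousWithinAt p₁ (Set.Ici t) t :=
        (rc₁ t ht).congr (fun s hs => hp₁eq s (le_trans ht hs)) (hp₁eq t ht)
      exact rp₁.add ((continuous_const.mul X2cont).continuousWithinAt)
    · intro t ht
      obtain ⟨L, hL⟩ := ll₁ t ht
      refine ⟨L + β * (x t).2, ?_⟩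
      have hee : φ₁ =ᶠ[𝓝[<] t] p₁ := by
        filter_upwards [Ioo_mem_nhdsLT_of_mem (⟨ht, le_refl t⟩ : t ∈ Set.Ioc 0 t)] with s hs
        exact (hp₁eq s (le_of_lt hs.1)).symm
      exact (hL.congr' hee).add
        (((continuous_const.mul X2cont).tendsto t).mono_left nhdsWithin_le_nhds)
  have cad₂ : Cadlag ψ₂ := by
    refine ⟨mψ₂, ?_, ?_, ?_⟩
    · intro T hT
      obtain ⟨M, hM⟩ := bψ T hT
      exact ⟨M, fun t ht => (hM t ht).2⟩
    · intro t ht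
      have rp₂ : ContinuousWithinAt p₂ (Set.Ici t) t :=
        (rc₂ t ht).congr (fun s hs => hp₂eq s (le_trans ht hs)) (hp₂eq t ht)
      exact (rp₂.sub ((continuous_const.mul X2cont).continuousWithinAt)).sub
        ((continuous_const.mul X1cont).continuousWithinAt)
    · intro t ht
      obtain ⟨L, hL⟩ := ll₂ t ht
      refine ⟨L - β * γ * (x t).2 - ε * (x t).1, ?_⟩
      have hee : φ₂ =ᶠ[𝓝[<] t] p₂ := by
        filter_upwards [Ioo_mem_nhdsLT_of_mem (⟨ht, le_refl t⟩ : t ∈ Set.Ioc 0 t)] with s hs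
        exact (hp₂eq s (le_of_lt hs.1)).symm
      exact ((hL.congr' hee).sub
        (((continuous_const.mul X2cont).tendsto t).mono_left nhdsWithin_le_nhds)).sub
        (((continuous_const.mul X1cont).tendsto t).mono_left nhdsWithin_le_nhds)
  refine ⟨ψ₁, ψ₂, Hsol, cad₁, cad₂, ?_⟩
  -- uniqueness via a Gronwall-type iteration
  intro χ₁ χ₂ hχ t ht
  obtain ⟨mχ₁, mχ₂, bχ, hqeq⟩ := hχ
  set T : ℝ := t + 1 with hTdef
  have hT0 : 0 < T := by rw [hTdef]; linarith
  obtain ⟨Mχ, hMχ⟩ := bχ T hT0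
  obtain ⟨Mψ, hMψ⟩ := bψ T hT0
  set d₁ : ℝ → ℝ := fun s => χ₁ s - ψ₁ s with hd₁def
  set d₂ : ℝ → ℝ := fun s => χ₂ s - ψ₂ s with hd₂def
  set K : ℝ := |Mχ| + |Mψ| with hKdef
  have habs_sub : ∀ a b : ℝ, |a - b| ≤ |a| + |b| := by
    intro a b
    calc |a - b| = |a + -b| := by rw [sub_eq_add_neg]
      _ ≤ |a| + |-b| := abs_add_le a (-b)
      _ = |a| + |b| := by rw [abs_neg]
  have hdbd : ∀ s ∈ Set.Icc (0:ℝ) T, |d₁ s| ≤ K ∧ |d₂ s| ≤ K := by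
    intro s hs
    constructor
    · exact (habs_sub (χ₁ s) (ψ₁ s)).trans (add_le_add
        ((hMχ s hs).1.trans (le_abs_self _)) ((hMψ s hs).1.trans (le_abs_self _)))
    · exact (habs_sub (χ₂ s) (ψ₂ s)).trans (add_le_add
        ((hMχ s hs).2.trans (le_abs_self _)) ((hMψ s hs).2.trans (le_abs_self _)))
  have χ₁II : ∀ s ∈ Set.Icc (0:ℝ) T, IntervalIntegrable χ₁ volume 0 s := by
    intro s hs
    refine II_of_bdd mχ₁.aestronglyMeasurable (M := |Mχ|) (fun r hr => ?_)
    rw [Set.uIcc_of_le hs.1] at hr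
    simpa [Real.norm_eq_abs] using ((hMχ r ⟨hr.1, hr.2.trans hs.2⟩).1).trans (le_abs_self _)
  have χ₂II : ∀ s ∈ Set.Icc (0:ℝ) T, IntervalIntegrable χ₂ volume 0 s := by
    intro s hs
    refine II_of_bdd mχ₂.aestronglyMeasurable (M := |Mχ|) (fun r hr => ?_)
    rw [Set.uIcc_of_le hs.1] at hr
    simpa [Real.norm_eq_abs] using ((hMχ r ⟨hr.1, hr.2.trans hs.2⟩).2).trans (le_abs_self _)
  have ψ₁II : ∀ s ∈ Set.Icc (0:ℝ) T, IntervalIntegrable ψ₁ volume 0 s := by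
    intro s hs
    refine II_of_bdd mψ₁.aestronglyMeasurable (M := |Mψ|) (fun r hr => ?_)
    rw [Set.uIcc_of_le hs.1] at hr
    simpa [Real.norm_eq_abs] using ((hMψ r ⟨hr.1, hr.2.trans hs.2⟩).1).trans (le_abs_self _)
  have ψ₂II : ∀ s ∈ Set.Icc (0:ℝ) T, IntervalIntegrable ψ₂ volume 0 s := by
    intro s hs
    refine II_of_bdd mψ₂.aestronglyMeasurable (M := |Mψ|) (fun r hr => ?_)
    rw [Set.uIcc_of_le hs.1] at hr
    simpa [Real.norm_eq_abs] using ((hMψ r ⟨hr.1, hr.2.trans hs.2⟩).2).trans (le_abs_self _)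
  have d₁II : ∀ s ∈ Set.Icc (0:ℝ) T, IntervalIntegrable d₁ volume 0 s := fun s hs =>
    (χ₁II s hs).sub (ψ₁II s hs)
  have d₂II : ∀ s ∈ Set.Icc (0:ℝ) T, IntervalIntegrable d₂ volume 0 s := fun s hs =>
    (χ₂II s hs).sub (ψ₂II s hs)
  set hfun : ℝ → ℝ := fun s => |d₁ s| + |d₂ s| with hfundef
  have hfunII : ∀ s ∈ Set.Icc (0:ℝ) T, IntervalIntegrable hfun volume 0 s := fun s hs =>
    ((d₁II s hs).abs).add ((d₂II s hs).abs)
  set C : ℝ := |β| + |β * γ| + |ε| with hCdef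
  have hC0 : 0 ≤ C := by positivity
  have hgron : ∀ s ∈ Set.Icc (0:ℝ) T, hfun s ≤ C * ∫ r in (0:ℝ)..s, hfun r := by
    intro s hs
    have e₁ : d₁ s = β * ∫ r in (0:ℝ)..s, d₂ r := by
      have a1 := (hqeq s hs.1).1
      have a2 := (Hsol.2.2.2 s hs.1).1
      show χ₁ s - ψ₁ s = _
      rw [a1, a2, intervalIntegral.integral_sub (χ₂II s hs) (ψ₂II s hs)]
      ring
    have e₂ : d₂ s = -(β * γ) * (∫ r in (0:ℝ)..s, d₂ r) - ε * ∫ r in (0:ℝ)..s, d₁ r := by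
      have a1 := (hqeq s hs.1).2
      have a2 := (Hsol.2.2.2 s hs.1).2
      show χ₂ s - ψ₂ s = _
      rw [a1, a2, intervalIntegral.integral_sub (χ₂II s hs) (ψ₂II s hs),
        intervalIntegral.integral_sub (χ₁II s hs) (ψ₁II s hs)]
      ring
    set I : ℝ := ∫ r in (0:ℝ)..s, hfun r with hI
    have i₂ : |∫ r in (0:ℝ)..s, d₂ r| ≤ I := by
      refine (intervalIntegral.abs_integral_le_integral_abs hs.1).trans ?_
      exact intervalIntegral.integral_mono_on hs.1 ((d₂II s hs).abs) (hfunII s hs)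
        (fun r _ => le_add_of_nonneg_left (abs_nonneg _))
    have i₁ : |∫ r in (0:ℝ)..s, d₁ r| ≤ I := by
      refine (intervalIntegral.abs_integral_le_integral_abs hs.1).trans ?_
      exact intervalIntegral.integral_mono_on hs.1 ((d₁II s hs).abs) (hfunII s hs)
        (fun r _ => le_add_of_nonneg_right (abs_nonneg _))
    have j₁ : |d₁ s| ≤ |β| * I := by
      rw [e₁, abs_mul]
      exact mul_le_mul_of_nonneg_left i₂ (abs_nonneg β)
    have j₂ : |d₂ s| ≤ |β * γ| * I + |ε| * I := by
      rw [e₂]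
      calc |(-(β * γ)) * (∫ r in (0:ℝ)..s, d₂ r) - ε * ∫ r in (0:ℝ)..s, d₁ r|
          ≤ |(-(β * γ)) * ∫ r in (0:ℝ)..s, d₂ r| + |ε * ∫ r in (0:ℝ)..s, d₁ r| :=
            habs_sub _ _
        _ = |β * γ| * |∫ r in (0:ℝ)..s, d₂ r| + |ε| * |∫ r in (0:ℝ)..s, d₁ r| := by
            rw [abs_mul, abs_mul, abs_neg]
        _ ≤ |β * γ| * I + |ε| * I := add_le_add
            (mul_le_mul_of_nonneg_left i₂ (abs_nonneg _))
            (mul_le_mul_of_nonneg_left i₁ (abs_nonneg _))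
    have : C * I = |β| * I + (|β * γ| * I + |ε| * I) := by rw [hCdef]; ring
    rw [hfundef]
    simp only []
    rw [this] at *
    linarith [j₁, j₂]
  have ind : ∀ n : ℕ, ∀ s ∈ Set.Icc (0:ℝ) T,
      hfun s ≤ 2 * K * (C ^ n * s ^ n / n.factorial) := by
    intro n
    induction n with
    | zero =>
      intro s hs
      have := (hdbd s hs).1
      have := (hdbd s hs).2
      simp only [pow_zero, Nat.factorial_zero, Nat.cast_one]
      show |d₁ s| + |d₂ s| ≤ _
      rw [show 2 * K * ((1:ℝ) * 1 / 1) = K + K from by ring]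
      linarith
    | succ n ih =>
      intro s hs
      have hs0 : 0 ≤ s := hs.1
      have step1 := hgron s hs
      have step2 : (∫ r in (0:ℝ)..s, hfun r) ≤
          ∫ r in (0:ℝ)..s, 2 * K * (C ^ n * r ^ n / n.factorial) := by
        refine intervalIntegral.integral_mono_on hs0 (hfunII s hs) ?_ ?_
        · exact (continuous_const.mul (((continuous_const.mul
            (continuous_pow n))).div_const _)).intervalIntegrable 0 s
        · intro r hr
          exact ih r ⟨hr.1, hr.2.trans hs.2⟩
      have step3 : (∫ r in (0:ℝ)..s, 2 * K * (C ^ n * r ^ n / n.factorial))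
          = (2 * K * C ^ n / n.factorial) * (s ^ (n + 1) / (n + 1)) := by
        have : (∫ r in (0:ℝ)..s, 2 * K * (C ^ n * r ^ n / n.factorial))
            = (2 * K * C ^ n / n.factorial) * ∫ r in (0:ℝ)..s, r ^ n := by
          rw [← intervalIntegral.integral_const_mul]
          apply intervalIntegral.integral_congr
          intro r _
          ring
        rw [this, integral_pow]
        ring
      have harith : C * ((2 * K * C ^ n / n.factorial) * (s ^ (n + 1) / (n + 1)))
          = 2 * K * (C ^ (n + 1) * s ^ (n + 1) / (n + 1).factorial) := by
        rw [Nat.factorial_succ]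
        have hn : ((n.factorial : ℝ)) ≠ 0 := Nat.cast_ne_zero.2 n.factorial_ne_zero
        have hn1 : ((n : ℝ) + 1) ≠ 0 := by positivity
        push_cast
        field_simp
        ring
      calc hfun s ≤ C * ∫ r in (0:ℝ)..s, hfun r := step1
        _ ≤ C * ((2 * K * C ^ n / n.factorial) * (s ^ (n + 1) / (n + 1))) := by
            rw [← step3]
            exact mul_le_mul_of_nonneg_left step2 hC0
        _ = 2 * K * (C ^ (n + 1) * s ^ (n + 1) / (n + 1).factorial) := harith
  have htmem : t ∈ Set.Icc (0:ℝ) T := ⟨ht, by rw [hTdef]; linarith⟩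
  have hlim : Tendsto (fun n : ℕ => 2 * K * (C ^ n * t ^ n / n.factorial)) atTop (𝓝 0) := by
    have h0 := FloorSemiring.tendsto_pow_div_factorial_atTop (K := ℝ) (C * t)
    have h1 := h0.const_mul (2 * K)
    rw [mul_zero] at h1
    refine h1.congr (fun n => ?_)
    rw [mul_pow]
  have hle0 : hfun t ≤ 0 := ge_of_tendsto' hlim (fun n => ind n t htmem)
  have h1 : |d₁ t| = 0 := by
    have := abs_nonneg (d₁ t); have := abs_nonneg (d₂ t)
    have : |d₁ t| + |d₂ t| ≤ 0 := hle0
    linarith [abs_nonneg (d₁ t), abs_nonneg (d₂ t)]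
  have h2 : |d₂ t| = 0 := by
    have : |d₁ t| + |d₂ t| ≤ 0 := hle0
    linarith [abs_nonneg (d₁ t), abs_nonneg (d₂ t)]
  exact ⟨sub_eq_zero.mp (abs_eq_zero.mp h1), sub_eq_zero.mp (abs_eq_zero.mp h2)⟩
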